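/- The expected number of simple tiles (lag 0) with temporal period τ and spatial period σ under a uniformly random n-state rule equals Σ_{d | gcd(τ,σ)} φ(d) · C(n, τσ/d) · (τσ/d - 1)! / n^(τσ/d), and this converges to λ_{τ,σ} = (1/(τσ)) Σ_{d | gcd(τ,σ)} φ(d)·d as n → ∞. -/

import Mathlib

/-- The set of distinct states appearing in a tile. -/
def states (n τ σ : ℕ) [NeZero τ] [NeZero σ] (T : ZMod τ → ZMod σ → ZMod n) :
    Finset (ZMod n) :=
  Finset.image (fun p : ZMod τ × ZMod σ => T p.1 p.2) Finset.univ

/-- The set of distinct row-adjacent pairs appearing in a tile (the assignments). -/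
def pairs (n τ σ : ℕ) [NeZero τ] [NeZero σ] (T : ZMod τ → ZMod σ → ZMod n) :
    Finset (ZMod n × ZMod n) :=
  Finset.image (fun p : ZMod τ × ZMod σ => (T p.1 p.2, T p.1 (p.2 + 1))) Finset.univ

/-- `T` is generated by the rule `f`. -/
def GenBy (n τ σ : ℕ) (f : ZMod n → ZMod n → ZMod n) (T : ZMod τ → ZMod σ → ZMod n) : Prop :=
  ∀ i j, T (i + 1) (j + 1) = f (T i j) (T i (j + 1))

/-- The temporal period `τ` of `T` is minimal. -/
def MinTemporal (n τ σ : ℕ) (T : ZMod τ → ZMod σ → ZMod n) : Prop :=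
  ∀ t : ZMod τ, t ≠ 0 → ∃ i j, T (i + t) j ≠ T i j

/-- The spatial period `σ` of `T` is minimal. -/
def MinSpatial (n τ σ : ℕ) (T : ZMod τ → ZMod σ → ZMod n) : Prop :=
  ∀ c : ZMod σ, c ≠ 0 → ∃ i j, T i (j + c) ≠ T i j

/-- `T` is simple: its assignment number equals its number of states (lag 0). -/
def Simple (n τ σ : ℕ) [NeZero τ] [NeZero σ] (T : ZMod τ → ZMod σ → ZMod n) : Prop :=
  (pairs n τ σ T).card = (states n τ σ T).card

set_option linter.unusedSectionVars false

section Tiles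
variable {n τ σ : ℕ} [NeZero n] [NeZero τ] [NeZero σ]

lemma mem_pairs {T : ZMod τ → ZMod σ → ZMod n} {p : ZMod n × ZMod n} :
    p ∈ pairs n τ σ T ↔ ∃ i j, (T i j, T i (j + 1)) = p := by
  simp [pairs, Finset.mem_image, Prod.exists]

lemma exists_g {T : ZMod τ → ZMod σ → ZMod n} (hs : Simple n τ σ T) :
    ∃ g : ZMod n → ZMod n, ∀ i j, T i (j + 1) = g (T i j) := by
  classical
  have himg : (pairs n τ σ T).image Prod.fst = states n τ σ T := by
    rw [pairs, states, Finset.image_image]; rfl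
  have hinj : Set.InjOn Prod.fst (pairs n τ σ T : Set (ZMod n × ZMod n)) :=
    Finset.injOn_of_card_image_eq (by rw [himg, ← hs])
  refine ⟨fun a => if h : ∃ b, (a, b) ∈ pairs n τ σ T then h.choose else 0, fun i j => ?_⟩
  have hmem : (T i j, T i (j + 1)) ∈ pairs n τ σ T := mem_pairs.2 ⟨i, j, rfl⟩
  have h : ∃ b, (T i j, b) ∈ pairs n τ σ T := ⟨T i (j + 1), hmem⟩
  show T i (j + 1) = if h : ∃ b, (T i j, b) ∈ pairs n τ σ T then h.choose else 0
  rw [dif_pos h]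
  have hc := h.choose_spec
  have := hinj hc hmem rfl
  exact (congrArg Prod.snd this).symm

/-- single-cell equality propagates to all shifts -/
lemma propagate {T : ZMod τ → ZMod σ → ZMod n} {f : ZMod n → ZMod n → ZMod n}
    (hf : GenBy n τ σ f T) {g : ZMod n → ZMod n}
    (hg : ∀ i j, T i (j + 1) = g (T i j))
    {i j i' j'} (h : T i j = T i' j') (t : ZMod τ) (c : ZMod σ) :
    T (i + t) (j + c) = T (i' + t) (j' + c) := by
  -- first: all columns within a row
  have row : ∀ (i₀ j₀ i₁ j₁ : _), T i₀ j₀ = T i₁ j₁ → ∀ c : ZMod σ,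
      T i₀ (j₀ + c) = T i₁ (j₁ + c) := by
    intro i₀ j₀ i₁ j₁ h c
    have hnat : ∀ b : ℕ, T i₀ (j₀ + (b : ZMod σ)) = T i₁ (j₁ + (b : ZMod σ)) := by
      intro b
      induction b with
      | zero => simpa using h
      | succ b ih =>
        push_cast
        rw [← add_assoc, ← add_assoc, hg i₀ (j₀ + b), hg i₁ (j₁ + b), ih]
    have := hnat c.val
    rwa [ZMod.natCast_rightInverse c] at this
  -- now rows
  have rows : ∀ a : ℕ, ∀ c : ZMod σ,
      T (i + (a : ZMod τ)) (j + c) = T (i' + (a : ZMod τ)) (j' + c) := by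
    intro a
    induction a with
    | zero => simpa using row i j i' j' h
    | succ a ih =>
      intro c
      have h1 := ih (c - 1)
      have h2 := ih c
      have e1 : T (i + (a : ZMod τ) + 1) ((j + (c - 1)) + 1)
          = f (T (i + (a : ZMod τ)) (j + (c - 1))) (T (i + (a : ZMod τ)) ((j + (c - 1)) + 1)) :=
        hf _ _
      have e2 : T (i' + (a : ZMod τ) + 1) ((j' + (c - 1)) + 1)
          = f (T (i' + (a : ZMod τ)) (j' + (c - 1))) (T (i' + (a : ZMod τ)) ((j' + (c - 1)) + 1)) :=
        hf _ _
      have hc1 : (j + (c - 1)) + 1 = j + c := by ring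
      have hc2 : (j' + (c - 1)) + 1 = j' + c := by ring
      rw [hc1] at e1
      rw [hc2] at e2
      push_cast
      rw [← add_assoc, ← add_assoc, e1, e2, h1, h2]
  have := rows t.val c
  rwa [ZMod.natCast_rightInverse t] at this

end Tiles
/-- translations fixing the tile -/
def stab {n τ σ : ℕ} (T : ZMod τ → ZMod σ → ZMod n) : AddSubgroup (ZMod τ × ZMod σ) where
  carrier := {p | ∀ i j, T (i + p.1) (j + p.2) = T i j}
  zero_mem' := by intro i j; simp
  add_mem' := by
    intro p q hp hq i j
    have e1 : i + (p + q).1 = (i + q.1) + p.1 := by rw [Prod.fst_add]; ring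
    have e2 : j + (p + q).2 = (j + q.2) + p.2 := by rw [Prod.snd_add]; ring
    rw [e1, e2, hp (i + q.1) (j + q.2), hq i j]
  neg_mem' := by
    intro p hp i j
    have := hp (i + (-p).1) (j + (-p).2)
    have e1 : i + (-p).1 + p.1 = i := by simp
    have e2 : j + (-p).2 + p.2 = j := by simp
    rw [e1, e2] at this
    exact this.symm

section Tiles2
variable {n τ σ : ℕ} [NeZero n] [NeZero τ] [NeZero σ]

lemma mem_stab {T : ZMod τ → ZMod σ → ZMod n} {p : ZMod τ × ZMod σ} :
    p ∈ stab T ↔ ∀ i j, T (i + p.1) (j + p.2) = T i j := Iff.rfl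

lemma eq_iff_sub_mem_stab {T : ZMod τ → ZMod σ → ZMod n} {f : ZMod n → ZMod n → ZMod n}
    (hf : GenBy n τ σ f T) (hs : Simple n τ σ T) {i i' : ZMod τ} {j j' : ZMod σ} :
    T i j = T i' j' ↔ (i' - i, j' - j) ∈ stab T := by
  obtain ⟨g, hg⟩ := exists_g hs
  constructor
  · intro h x y
    have := propagate hf hg h (x - i) (y - j)
    have e1 : i + (x - i) = x := by ring
    have e2 : j + (y - j) = y := by ring
    have e3 : i' + (x - i) = x + (i' - i) := by ring
    have e4 : j' + (y - j) = y + (j' - j) := by ring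
    rw [e1, e2, e3, e4] at this
    exact this.symm
  · intro hmem
    have := hmem i j
    have e1 : i + (i' - i) = i' := by ring
    have e2 : j + (j' - j) = j' := by ring
    rw [e1, e2] at this
    exact this.symm

lemma stab_fst_eq_zero {T : ZMod τ → ZMod σ → ZMod n} (hmt : MinTemporal n τ σ T)
    {p : ZMod τ × ZMod σ} (hp : p ∈ stab T) (h2 : p.2 = 0) : p.1 = 0 := by
  by_contra h1
  obtain ⟨i, j, hij⟩ := hmt p.1 h1
  exact hij (by simpa [h2] using hp i j)

lemma stab_snd_eq_zero {T : ZMod τ → ZMod σ → ZMod n} (hms : MinSpatial n τ σ T)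
    {p : ZMod τ × ZMod σ} (hp : p ∈ stab T) (h1 : p.1 = 0) : p.2 = 0 := by
  by_contra h2
  obtain ⟨i, j, hij⟩ := hms p.2 h2
  exact hij (by simpa [h1] using hp i j)

lemma card_states_mul_card_stab {T : ZMod τ → ZMod σ → ZMod n} {f : ZMod n → ZMod n → ZMod n}
    (hf : GenBy n τ σ f T) (hs : Simple n τ σ T) :
    (states n τ σ T).card * Nat.card (stab T) = τ * σ := by
  classical
  have hwd : ∀ a b : ZMod τ × ZMod σ, (QuotientAddGroup.leftRel (stab T)) a b →
      T a.1 a.2 = T b.1 b.2 := by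
    intro a b hab
    rw [QuotientAddGroup.leftRel_apply] at hab
    refine (eq_iff_sub_mem_stab hf hs).2 ?_
    simpa [sub_eq_neg_add] using (show (-a.1 + b.1, -a.2 + b.2) ∈ stab T from hab)
  let F : (ZMod τ × ZMod σ) ⧸ stab T → ZMod n := Quotient.lift (fun p => T p.1 p.2) hwd
  have hFinj : Function.Injective F := by
    intro a b
    induction a using Quotient.ind
    induction b using Quotient.ind
    rename_i a b
    intro hab
    have : T a.1 a.2 = T b.1 b.2 := hab
    refine (QuotientAddGroup.eq).2 ?_
    have := (eq_iff_sub_mem_stab hf hs).1 this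
    show (-a.1 + b.1, -a.2 + b.2) ∈ stab T
    simpa [sub_eq_neg_add] using this
  have hrange : Set.range F = (states n τ σ T : Set (ZMod n)) := by
    ext a
    constructor
    · rintro ⟨q, rfl⟩
      induction q using Quotient.ind
      rename_i p
      simp only [states, Finset.coe_image, Finset.coe_univ, Set.image_univ]
      exact ⟨p, rfl⟩
    · intro ha
      simp only [states, Finset.coe_image, Finset.coe_univ, Set.image_univ,
        Set.mem_range] at ha
      obtain ⟨p, hp⟩ := ha
      exact ⟨Quotient.mk _ p, hp⟩
  have hcardq : Nat.card ((ZMod τ × ZMod σ) ⧸ stab T) = (states n τ σ T).card := by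
    have e1 : Nat.card ((ZMod τ × ZMod σ) ⧸ stab T) = Nat.card (Set.range F) :=
      Nat.card_congr (Equiv.ofInjective F hFinj)
    rw [e1, hrange]
    simp [Nat.card_eq_fintype_card]
  have := AddSubgroup.card_eq_card_quotient_mul_card_addSubgroup (stab T)
  rw [hcardq] at this
  have hcard : Nat.card (ZMod τ × ZMod σ) = τ * σ := by
    simp [Nat.card_eq_fintype_card, ZMod.card]
  rw [← hcard]
  exact this.symm

end Tiles2
section Tiles3
variable {n τ σ : ℕ} [NeZero n] [NeZero τ] [NeZero σ]

instance {f : ZMod n → ZMod n → ZMod n} {T : ZMod τ → ZMod σ → ZMod n} :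
    Decidable (GenBy n τ σ f T) := by unfold GenBy; infer_instance

instance {T : ZMod τ → ZMod σ → ZMod n} : Decidable (MinTemporal n τ σ T) := by
  unfold MinTemporal; infer_instance

instance {T : ZMod τ → ZMod σ → ZMod n} : Decidable (MinSpatial n τ σ T) := by
  unfold MinSpatial; infer_instance

instance {T : ZMod τ → ZMod σ → ZMod n} : Decidable (Simple n τ σ T) := by
  unfold Simple; infer_instance

lemma card_genBy {T : ZMod τ → ZMod σ → ZMod n} {f₀ : ZMod n → ZMod n → ZMod n}
    (hf : GenBy n τ σ f₀ T) (hs : Simple n τ σ T) :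
    (Finset.univ.filter (fun f : ZMod n → ZMod n → ZMod n => GenBy n τ σ f T)).card *
      n ^ (states n τ σ T).card = n ^ (n ^ 2) := by
  classical
  set P := pairs n τ σ T with hP
  have hfilter : Finset.univ.filter (fun f : ZMod n → ZMod n → ZMod n => GenBy n τ σ f T) =
      Finset.univ.filter (fun f : ZMod n → ZMod n → ZMod n => ∀ p ∈ P, f p.1 p.2 = f₀ p.1 p.2) := by
    ext f
    simp only [Finset.mem_filter, Finset.mem_univ, true_and]
    constructor
    · intro hgen p hp
      obtain ⟨i, j, hij⟩ := mem_pairs.1 hp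
      rw [← hij]
      rw [← hgen i j, ← hf i j]
    · intro hagree i j
      have hmem : (T i j, T i (j + 1)) ∈ P := mem_pairs.2 ⟨i, j, rfl⟩
      have := hagree _ hmem
      simp only at this
      rw [this, ← hf i j]
  rw [hfilter]
  have hcard1 : (Finset.univ.filter
      (fun f : ZMod n → ZMod n → ZMod n => ∀ p ∈ P, f p.1 p.2 = f₀ p.1 p.2)).card =
      Fintype.card {f : ZMod n → ZMod n → ZMod n // ∀ p ∈ P, f p.1 p.2 = f₀ p.1 p.2} :=
    (Fintype.card_subtype _).symm
  let e : {f : ZMod n → ZMod n → ZMod n // ∀ p ∈ P, f p.1 p.2 = f₀ p.1 p.2} ≃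
      ({p : ZMod n × ZMod n // p ∉ P} → ZMod n) :=
    { toFun := fun f => fun q => f.1 q.1.1 q.1.2
      invFun := fun g => ⟨fun a b => if h : (a, b) ∈ P then f₀ a b else g ⟨(a, b), h⟩, by
        intro p hp
        have hpp : ((p.1, p.2) : ZMod n × ZMod n) = p := rfl
        simp only [hpp, dif_pos hp]⟩
      left_inv := by
        rintro ⟨f, hf'⟩
        ext a b
        by_cases h : (a, b) ∈ P
        · simp only [dif_pos h]
          exact (hf' (a, b) h).symm
        · simp only [dif_neg h]
      right_inv := by
        intro g
        ext q
        obtain ⟨⟨a, b⟩, hq⟩ := q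
        simp only [dif_neg hq] }
  have hcard2 : Fintype.card {f : ZMod n → ZMod n → ZMod n // ∀ p ∈ P, f p.1 p.2 = f₀ p.1 p.2} =
      n ^ (n ^ 2 - P.card) := by
    rw [Fintype.card_congr e, Fintype.card_fun]
    congr 1
    · exact ZMod.card n
    · rw [Fintype.card_subtype_compl]
      congr 1
      · simp [ZMod.card, sq]
      · simp
  have hle : P.card ≤ n ^ 2 := by
    have := Finset.card_le_univ P
    simpa [ZMod.card, sq] using this
  rw [hcard1, hcard2, ← hs, pow_sub_mul_pow (n : ℕ) hle]

end Tiles3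
section Tiles4
open scoped Classical
variable {n τ σ : ℕ} [NeZero n] [NeZero τ] [NeZero σ]

lemma zsmul_eq_zero_of_fst {d : ℕ} {p : ZMod τ × ZMod σ}
    (h1 : addOrderOf p.1 = d) (h2 : addOrderOf p.2 = d) {k : ℤ} (hk : k • p.1 = 0) :
    k • p = 0 := by
  have hd : ((d : ℕ) : ℤ) ∣ k := by rw [← h1]; exact addOrderOf_dvd_iff_zsmul_eq_zero.2 hk
  have h2' : k • p.2 = 0 := addOrderOf_dvd_iff_zsmul_eq_zero.1 (by rwa [h2])
  have hp : k • p = (k • p.1, k • p.2) := rfl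
  rw [hp, hk, h2']
  rfl

lemma zsmul_eq_zero_of_snd {d : ℕ} {p : ZMod τ × ZMod σ}
    (h1 : addOrderOf p.1 = d) (h2 : addOrderOf p.2 = d) {k : ℤ} (hk : k • p.2 = 0) :
    k • p = 0 := by
  have hd : ((d : ℕ) : ℤ) ∣ k := by rw [← h2]; exact addOrderOf_dvd_iff_zsmul_eq_zero.2 hk
  have h1' : k • p.1 = 0 := addOrderOf_dvd_iff_zsmul_eq_zero.1 (by rwa [h1])
  have hp : k • p = (k • p.1, k • p.2) := rfl
  rw [hp, hk, h1']
  rfl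

lemma min_of_stab_eq {T : ZMod τ → ZMod σ → ZMod n} {d : ℕ} {p : ZMod τ × ZMod σ}
    (h1 : addOrderOf p.1 = d) (h2 : addOrderOf p.2 = d)
    (hst : stab T = AddSubgroup.zmultiples p) :
    MinTemporal n τ σ T ∧ MinSpatial n τ σ T := by
  constructor
  · intro t ht
    by_contra hcon
    push_neg at hcon
    have hmem : ((t, 0) : ZMod τ × ZMod σ) ∈ stab T := by
      intro i j; simpa using hcon i j
    rw [hst, AddSubgroup.mem_zmultiples_iff] at hmem
    obtain ⟨k, hk⟩ := hmem
    have h2' : k • p.2 = 0 := congrArg Prod.snd hk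
    have hz : k • p = 0 := zsmul_eq_zero_of_snd h1 h2 h2'
    rw [hz] at hk
    exact ht (congrArg Prod.fst hk).symm
  · intro c hc
    by_contra hcon
    push_neg at hcon
    have hmem : ((0, c) : ZMod τ × ZMod σ) ∈ stab T := by
      intro i j; simpa using hcon i j
    rw [hst, AddSubgroup.mem_zmultiples_iff] at hmem
    obtain ⟨k, hk⟩ := hmem
    have h1' : k • p.1 = 0 := congrArg Prod.fst hk
    have hz : k • p = 0 := zsmul_eq_zero_of_fst h1 h2 h1'
    rw [hz] at hk
    exact hc (congrArg Prod.snd hk).symm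

lemma card_tiles_with_stab (H : AddSubgroup (ZMod τ × ZMod σ)) :
    (Finset.univ.filter (fun T : ZMod τ → ZMod σ → ZMod n =>
      ((∃ f, GenBy n τ σ f T) ∧ Simple n τ σ T) ∧ stab T = H)).card =
      Nat.descFactorial n (Nat.card ((ZMod τ × ZMod σ) ⧸ H)) := by
  classical
  haveI : Fintype ((ZMod τ × ZMod σ) ⧸ H) := Fintype.ofFinite _
  rw [← Fintype.card_subtype]
  have hmk_surj : Function.Surjective (QuotientAddGroup.mk : ZMod τ × ZMod σ → (ZMod τ × ZMod σ) ⧸ H) :=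
    QuotientAddGroup.mk_surjective
  have key : ∀ (T : ZMod τ → ZMod σ → ZMod n),
      (((∃ f, GenBy n τ σ f T) ∧ Simple n τ σ T) ∧ stab T = H) →
      ∀ a b : ZMod τ × ZMod σ, (QuotientAddGroup.leftRel H) a b → T a.1 a.2 = T b.1 b.2 := by
    intro T hT a b hab
    rw [QuotientAddGroup.leftRel_apply] at hab
    obtain ⟨⟨⟨f, hf⟩, hs⟩, hH⟩ := hT
    refine (eq_iff_sub_mem_stab hf hs).2 ?_
    rw [hH]
    simpa [sub_eq_neg_add] using (show (-a.1 + b.1, -a.2 + b.2) ∈ H from hab)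
  let e : {T : ZMod τ → ZMod σ → ZMod n //
      ((∃ f, GenBy n τ σ f T) ∧ Simple n τ σ T) ∧ stab T = H} ≃
      (((ZMod τ × ZMod σ) ⧸ H) ↪ ZMod n) :=
    { toFun := fun T => ⟨Quotient.lift (fun q : ZMod τ × ZMod σ => T.1 q.1 q.2) (key T.1 T.2), by
        intro a b
        induction a using Quotient.ind
        induction b using Quotient.ind
        rename_i a b
        intro hab
        have hab' : T.1 a.1 a.2 = T.1 b.1 b.2 := hab
        obtain ⟨⟨⟨f, hf⟩, hs⟩, hH⟩ := T.2
        have := (eq_iff_sub_mem_stab hf hs).1 hab'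
        rw [hH] at this
        exact (QuotientAddGroup.eq).2 (by
          show (-a.1 + b.1, -a.2 + b.2) ∈ H
          simpa [sub_eq_neg_add] using this)⟩
      invFun := fun L => ⟨fun i j => L (QuotientAddGroup.mk (i, j)), by
        refine ⟨⟨?_, ?_⟩, ?_⟩
        · -- ∃ f, GenBy
          refine ⟨fun a b => if h : ∃ q, L q = a then
              L (h.choose + QuotientAddGroup.mk ((1 : ZMod τ), (1 : ZMod σ))) else 0, ?_⟩
          intro i j
          have hex : ∃ q, L q = L (QuotientAddGroup.mk (i, j)) := ⟨_, rfl⟩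
          show L (QuotientAddGroup.mk (i + 1, j + 1)) =
            if h : ∃ q, L q = L (QuotientAddGroup.mk (i, j)) then
              L (h.choose + QuotientAddGroup.mk ((1 : ZMod τ), (1 : ZMod σ))) else 0
          rw [dif_pos hex]
          have hch : hex.choose = QuotientAddGroup.mk (i, j) := L.injective hex.choose_spec
          rw [hch, ← QuotientAddGroup.mk_add]
          rfl
        · -- Simple
          have hstates : states n τ σ (fun i j => L (QuotientAddGroup.mk (i, j))) =
              Finset.univ.image (fun q : (ZMod τ × ZMod σ) ⧸ H => L q) := by
            rw [states, ← Finset.image_univ_of_surjective hmk_surj, Finset.image_image]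
            rfl
          have hpairs : pairs n τ σ (fun i j => L (QuotientAddGroup.mk (i, j))) =
              Finset.univ.image (fun q : (ZMod τ × ZMod σ) ⧸ H =>
                (L q, L (q + QuotientAddGroup.mk ((0 : ZMod τ), (1 : ZMod σ))))) := by
            rw [pairs, ← Finset.image_univ_of_surjective hmk_surj, Finset.image_image]
            apply Finset.image_congr
            intro pr _
            show (L (QuotientAddGroup.mk (pr.1, pr.2)), L (QuotientAddGroup.mk (pr.1, pr.2 + 1))) =
              (L (QuotientAddGroup.mk pr),
                L (QuotientAddGroup.mk pr + QuotientAddGroup.mk ((0 : ZMod τ), (1 : ZMod σ))))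
            rw [← QuotientAddGroup.mk_add]
            have h2 : ((pr.1, pr.2 + 1) : ZMod τ × ZMod σ) = pr + (0, 1) := by ext <;> simp
            rw [show ((pr.1, pr.2) : ZMod τ × ZMod σ) = pr from rfl, h2]
          rw [Simple, hstates, hpairs,
            Finset.card_image_of_injective _ (fun a b hab => L.injective (congrArg Prod.fst hab)),
            Finset.card_image_of_injective _ L.injective]
        · -- stab = H
          ext q
          constructor
          · intro hq
            have hq' : ∀ i j, L (QuotientAddGroup.mk (i + q.1, j + q.2)) =
                L (QuotientAddGroup.mk (i, j)) := hq
            have h00 := hq' 0 0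
            have h0 : ((0 : ZMod τ) + q.1, (0 : ZMod σ) + q.2) = q := by ext <;> simp
            rw [h0] at h00
            have hinj : (QuotientAddGroup.mk q : (ZMod τ × ZMod σ) ⧸ H) =
                QuotientAddGroup.mk ((0 : ZMod τ), (0 : ZMod σ)) := L.injective h00
            rw [show (((0 : ZMod τ), (0 : ZMod σ))) = (0 : ZMod τ × ZMod σ) from rfl,
              QuotientAddGroup.mk_zero] at hinj
            exact (QuotientAddGroup.eq_zero_iff q).1 hinj
          · intro hq i j
            show L (QuotientAddGroup.mk (i + q.1, j + q.2)) = L (QuotientAddGroup.mk (i, j))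
            have : ((i + q.1, j + q.2) : ZMod τ × ZMod σ) = (i, j) + q := rfl
            rw [this, QuotientAddGroup.mk_add, (QuotientAddGroup.eq_zero_iff q).2 hq, add_zero]⟩
      left_inv := fun T => Subtype.ext rfl
      right_inv := fun L => by
        ext q
        induction q using Quotient.ind
        rfl }
  rw [Fintype.card_congr e, Fintype.card_embedding_eq, ZMod.card, Nat.card_eq_fintype_card]

end Tiles4
section Tiles5
open scoped Classical
variable {n τ σ : ℕ} [NeZero n] [NeZero τ] [NeZero σ]

/-- E1 -/
lemma card_quotient_mul_card (H : AddSubgroup (ZMod τ × ZMod σ)) :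
    Nat.card ((ZMod τ × ZMod σ) ⧸ H) * Nat.card H = τ * σ := by
  have := AddSubgroup.card_eq_card_quotient_mul_card_addSubgroup H
  have hcard : Nat.card (ZMod τ × ZMod σ) = τ * σ := by
    simp [Nat.card_eq_fintype_card, ZMod.card]
  rw [← hcard]
  exact this.symm

/-- Nat.card of quotient by stab equals number of states -/
lemma card_quotient_stab {T : ZMod τ → ZMod σ → ZMod n} {f : ZMod n → ZMod n → ZMod n}
    (hf : GenBy n τ σ f T) (hs : Simple n τ σ T) :
    Nat.card ((ZMod τ × ZMod σ) ⧸ stab T) = (states n τ σ T).card := by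
  classical
  have hwd : ∀ a b : ZMod τ × ZMod σ, (QuotientAddGroup.leftRel (stab T)) a b →
      T a.1 a.2 = T b.1 b.2 := by
    intro a b hab
    rw [QuotientAddGroup.leftRel_apply] at hab
    refine (eq_iff_sub_mem_stab hf hs).2 ?_
    simpa [sub_eq_neg_add] using (show (-a.1 + b.1, -a.2 + b.2) ∈ stab T from hab)
  let F : (ZMod τ × ZMod σ) ⧸ stab T → ZMod n := Quotient.lift (fun p => T p.1 p.2) hwd
  have hFinj : Function.Injective F := by
    intro a b
    induction a using Quotient.ind
    induction b using Quotient.ind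
    rename_i a b
    intro hab
    have : T a.1 a.2 = T b.1 b.2 := hab
    refine (QuotientAddGroup.eq).2 ?_
    have := (eq_iff_sub_mem_stab hf hs).1 this
    show (-a.1 + b.1, -a.2 + b.2) ∈ stab T
    simpa [sub_eq_neg_add] using this
  have hrange : Set.range F = (states n τ σ T : Set (ZMod n)) := by
    ext a
    constructor
    · rintro ⟨q, rfl⟩
      induction q using Quotient.ind
      rename_i p
      simp only [states, Finset.coe_image, Finset.coe_univ, Set.image_univ]
      exact ⟨p, rfl⟩
    · intro ha
      simp only [states, Finset.coe_image, Finset.coe_univ, Set.image_univ,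
        Set.mem_range] at ha
      obtain ⟨p, hp⟩ := ha
      exact ⟨Quotient.mk _ p, hp⟩
  have e1 : Nat.card ((ZMod τ × ZMod σ) ⧸ stab T) = Nat.card (Set.range F) :=
    Nat.card_congr (Equiv.ofInjective F hFinj)
  rw [e1, hrange]
  simp [Nat.card_eq_fintype_card]

/-- injectivity of the first projection on the stabilizer -/
lemma stab_fst_injective {T : ZMod τ → ZMod σ → ZMod n} (hms : MinSpatial n τ σ T) :
    Function.Injective ((AddMonoidHom.fst (ZMod τ) (ZMod σ)).comp (stab T).subtype) := by
  rw [injective_iff_map_eq_zero]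
  intro a ha
  have h2 : (a : ZMod τ × ZMod σ).2 = 0 := stab_snd_eq_zero hms a.2 ha
  ext
  · exact ha
  · exact h2

lemma stab_snd_injective {T : ZMod τ → ZMod σ → ZMod n} (hmt : MinTemporal n τ σ T) :
    Function.Injective ((AddMonoidHom.snd (ZMod τ) (ZMod σ)).comp (stab T).subtype) := by
  rw [injective_iff_map_eq_zero]
  intro a ha
  have h1 : (a : ZMod τ × ZMod σ).1 = 0 := stab_fst_eq_zero hmt a.2 ha
  ext
  · exact h1
  · exact ha

/-- E3 : the order of the stabilizer divides gcd τ σ -/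
lemma card_stab_dvd_gcd {T : ZMod τ → ZMod σ → ZMod n}
    (hmt : MinTemporal n τ σ T) (hms : MinSpatial n τ σ T) :
    Nat.card (stab T) ∣ Nat.gcd τ σ := by
  have h1 : Nat.card (stab T) ∣ τ := by
    have e := Nat.card_congr (AddMonoidHom.ofInjective (stab_fst_injective hms)).toEquiv
    rw [e]
    have := AddSubgroup.card_addSubgroup_dvd_card
      ((AddMonoidHom.fst (ZMod τ) (ZMod σ)).comp (stab T).subtype).range
    simpa [Nat.card_eq_fintype_card, ZMod.card] using this
  have h2 : Nat.card (stab T) ∣ σ := by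
    have e := Nat.card_congr (AddMonoidHom.ofInjective (stab_snd_injective hmt)).toEquiv
    rw [e]
    have := AddSubgroup.card_addSubgroup_dvd_card
      ((AddMonoidHom.snd (ZMod τ) (ZMod σ)).comp (stab T).subtype).range
    simpa [Nat.card_eq_fintype_card, ZMod.card] using this
  exact Nat.dvd_gcd h1 h2

/-- E2 : number of generator pairs of the stabilizer -/
lemma card_generators {T : ZMod τ → ZMod σ → ZMod n}
    (hmt : MinTemporal n τ σ T) (hms : MinSpatial n τ σ T) :
    (Finset.univ.filter (fun p : ZMod τ × ZMod σ =>
      (addOrderOf p.1 = Nat.card (stab T) ∧ addOrderOf p.2 = Nat.card (stab T)) ∧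
      AddSubgroup.zmultiples p = stab T)).card = Nat.totient (Nat.card (stab T)) := by
  classical
  set d := Nat.card (stab T) with hd
  haveI : Fintype (stab T) := Fintype.ofFinite _
  have hdpos : 0 < d := Nat.card_pos
  -- the filter equals the set of elements of stab T of order d
  have hset : Finset.univ.filter (fun p : ZMod τ × ZMod σ =>
      (addOrderOf p.1 = d ∧ addOrderOf p.2 = d) ∧ AddSubgroup.zmultiples p = stab T) =
      Finset.univ.filter (fun p : ZMod τ × ZMod σ => p ∈ stab T ∧ addOrderOf p = d) := by
    ext p
    simp only [Finset.mem_filter, Finset.mem_univ, true_and]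
    constructor
    · rintro ⟨⟨h1, h2⟩, hz⟩
      have hp_mem : p ∈ stab T := by
        rw [← hz]; exact AddSubgroup.mem_zmultiples p
      refine ⟨hp_mem, ?_⟩
      rw [← Nat.card_zmultiples p, hz]
    · rintro ⟨hp_mem, hord⟩
      have hcomp : addOrderOf p.1 = d ∧ addOrderOf p.2 = d := by
        have hfst : addOrderOf p.1 = d := by
          have hdvd1 : addOrderOf p.1 ∣ d := by
            refine addOrderOf_dvd_of_nsmul_eq_zero ?_
            have : (d • p) = 0 := by
              rw [← hord]; exact addOrderOf_nsmul_eq_zero p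
            exact congrArg Prod.fst this
          have hdvd2 : d ∣ addOrderOf p.1 := by
            -- (k • p).1 = 0 where k = addOrderOf p.1, so k • p ∈ stab with fst 0
            set k := addOrderOf p.1
            have hk1 : (k • p).1 = 0 := by
              have : (k • p).1 = k • p.1 := rfl
              rw [this, addOrderOf_nsmul_eq_zero]
            have hkmem : k • p ∈ stab T := AddSubgroup.nsmul_mem _ hp_mem k
            have hk2 : (k • p).2 = 0 := stab_snd_eq_zero hms hkmem hk1
            have hk0 : k • p = 0 := by
              ext
              · exact hk1
              · exact hk2
            rw [← hord]
            exact addOrderOf_dvd_of_nsmul_eq_zero hk0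
          exact Nat.dvd_antisymm hdvd1 hdvd2
        have hsnd : addOrderOf p.2 = d := by
          have hdvd1 : addOrderOf p.2 ∣ d := by
            refine addOrderOf_dvd_of_nsmul_eq_zero ?_
            have : (d • p) = 0 := by
              rw [← hord]; exact addOrderOf_nsmul_eq_zero p
            exact congrArg Prod.snd this
          have hdvd2 : d ∣ addOrderOf p.2 := by
            set k := addOrderOf p.2
            have hk2 : (k • p).2 = 0 := by
              have : (k • p).2 = k • p.2 := rfl
              rw [this, addOrderOf_nsmul_eq_zero]
            have hkmem : k • p ∈ stab T := AddSubgroup.nsmul_mem _ hp_mem k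
            have hk1 : (k • p).1 = 0 := stab_fst_eq_zero hmt hkmem hk2
            have hk0 : k • p = 0 := by
              ext
              · exact hk1
              · exact hk2
            rw [← hord]
            exact addOrderOf_dvd_of_nsmul_eq_zero hk0
          exact Nat.dvd_antisymm hdvd1 hdvd2
        exact ⟨hfst, hsnd⟩
      refine ⟨hcomp, ?_⟩
      refine AddSubgroup.eq_of_le_of_card_ge (AddSubgroup.zmultiples_le.2 hp_mem) ?_
      rw [Nat.card_zmultiples, hord]
  rw [hset]
  -- count inside the subgroup
  haveI : IsAddCyclic (stab T) := by
    have hinj := stab_fst_injective hms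
    exact isAddCyclic_of_surjective (AddMonoidHom.ofInjective hinj).symm
      (AddEquiv.surjective _)
  have hbij : (Finset.univ.filter (fun p : ZMod τ × ZMod σ =>
      p ∈ stab T ∧ addOrderOf p = d)).card =
      (Finset.univ.filter (fun x : stab T => addOrderOf x = d)).card := by
    refine Finset.card_bij (fun p hp => ⟨p, (Finset.mem_filter.1 hp).2.1⟩) ?_ ?_ ?_
    · intro a ha
      simp only [Finset.mem_filter, Finset.mem_univ, true_and] at ha ⊢
      rw [← AddSubgroup.addOrderOf_coe]
      exact ha.2
    · intro a ha b hb hab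
      exact congrArg Subtype.val hab
    · intro b hb
      simp only [Finset.mem_filter, Finset.mem_univ, true_and] at hb
      refine ⟨b, ?_, rfl⟩
      simp only [Finset.mem_filter, Finset.mem_univ, true_and]
      exact ⟨b.2, by rw [AddSubgroup.addOrderOf_coe]; exact hb⟩
  rw [hbij]
  refine IsAddCyclic.card_addOrderOf_eq_totient ?_
  rw [← Nat.card_eq_fintype_card]

end Tiles5
section Tiles6
open scoped Classical
variable {n τ σ : ℕ} [NeZero n] [NeZero τ] [NeZero σ]

/-- translated tile -/
def shiftT (T : ZMod τ → ZMod σ → ZMod n) (p : ZMod τ × ZMod σ) : ZMod τ → ZMod σ → ZMod n :=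
  fun i j => T (i + p.1) (j + p.2)

lemma genBy_shiftT {T : ZMod τ → ZMod σ → ZMod n} {f : ZMod n → ZMod n → ZMod n}
    (hf : GenBy n τ σ f T) (p : ZMod τ × ZMod σ) : GenBy n τ σ f (shiftT T p) := by
  intro i j
  show T (i + 1 + p.1) (j + 1 + p.2) = f (T (i + p.1) (j + p.2)) (T (i + p.1) (j + 1 + p.2))
  have e1 : i + 1 + p.1 = (i + p.1) + 1 := by ring
  have e2 : j + 1 + p.2 = (j + p.2) + 1 := by ring
  rw [e1, e2]
  exact hf (i + p.1) (j + p.2)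

lemma stab_shiftT {T : ZMod τ → ZMod σ → ZMod n} (p : ZMod τ × ZMod σ) :
    stab (shiftT T p) = stab T := by
  ext q
  constructor
  · intro h i j
    have := h (i - p.1) (j - p.2)
    show T (i + q.1) (j + q.2) = T i j
    have e1 : i - p.1 + q.1 + p.1 = i + q.1 := by ring
    have e2 : j - p.2 + q.2 + p.2 = j + q.2 := by ring
    have e3 : i - p.1 + p.1 = i := by ring
    have e4 : j - p.2 + p.2 = j := by ring
    show T (i + q.1) (j + q.2) = T i j
    calc T (i + q.1) (j + q.2) = T (i - p.1 + q.1 + p.1) (j - p.2 + q.2 + p.2) := by rw [e1, e2]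
    _ = T (i - p.1 + p.1) (j - p.2 + p.2) := this
    _ = T i j := by rw [e3, e4]
  · intro h i j
    show T (i + q.1 + p.1) (j + q.2 + p.2) = T (i + p.1) (j + p.2)
    have e1 : i + q.1 + p.1 = (i + p.1) + q.1 := by ring
    have e2 : j + q.2 + p.2 = (j + p.2) + q.2 := by ring
    rw [e1, e2]
    exact h (i + p.1) (j + p.2)

lemma shift_surjective (p : ZMod τ × ZMod σ) :
    Function.Surjective (fun pr : ZMod τ × ZMod σ => (pr.1 + p.1, pr.2 + p.2)) := by
  intro pr
  exact ⟨(pr.1 - p.1, pr.2 - p.2), by ext <;> simp⟩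

lemma states_shiftT {T : ZMod τ → ZMod σ → ZMod n} (p : ZMod τ × ZMod σ) :
    states n τ σ (shiftT T p) = states n τ σ T := by
  have h1 : states n τ σ (shiftT T p) =
      Finset.image (fun pr : ZMod τ × ZMod σ => T pr.1 pr.2)
        (Finset.image (fun pr : ZMod τ × ZMod σ => (pr.1 + p.1, pr.2 + p.2)) Finset.univ) := by
    rw [Finset.image_image]
    rfl
  rw [h1, Finset.image_univ_of_surjective (shift_surjective p), states]

lemma pairs_shiftT {T : ZMod τ → ZMod σ → ZMod n} (p : ZMod τ × ZMod σ) :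
    pairs n τ σ (shiftT T p) = pairs n τ σ T := by
  have h0 : pairs n τ σ (shiftT T p) = Finset.image
      ((fun pr : ZMod τ × ZMod σ => (T pr.1 pr.2, T pr.1 (pr.2 + 1))) ∘
        (fun pr : ZMod τ × ZMod σ => (pr.1 + p.1, pr.2 + p.2))) Finset.univ := by
    rw [pairs]
    apply Finset.image_congr
    intro pr _
    show (T (pr.1 + p.1) (pr.2 + p.2), T (pr.1 + p.1) (pr.2 + 1 + p.2)) =
      (T (pr.1 + p.1) (pr.2 + p.2), T (pr.1 + p.1) ((pr.2 + p.2) + 1))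
    rw [show pr.2 + 1 + p.2 = (pr.2 + p.2) + 1 by ring]
  rw [h0, ← Finset.image_image, Finset.image_univ_of_surjective (shift_surjective p), pairs]

lemma pred_shiftT {T : ZMod τ → ZMod σ → ZMod n} {f : ZMod n → ZMod n → ZMod n}
    (h : GenBy n τ σ f T ∧ MinTemporal n τ σ T ∧ MinSpatial n τ σ T ∧ Simple n τ σ T)
    (p : ZMod τ × ZMod σ) :
    GenBy n τ σ f (shiftT T p) ∧ MinTemporal n τ σ (shiftT T p) ∧
      MinSpatial n τ σ (shiftT T p) ∧ Simple n τ σ (shiftT T p) := by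
  obtain ⟨hf, hmt, hms, hs⟩ := h
  refine ⟨genBy_shiftT hf p, ?_, ?_, ?_⟩
  · intro t ht
    by_contra hcon
    push_neg at hcon
    have hmem : ((t, 0) : ZMod τ × ZMod σ) ∈ stab (shiftT T p) := by
      intro i j
      simpa using hcon i j
    rw [stab_shiftT] at hmem
    exact ht (stab_fst_eq_zero hmt hmem rfl)
  · intro c hc
    by_contra hcon
    push_neg at hcon
    have hmem : ((0, c) : ZMod τ × ZMod σ) ∈ stab (shiftT T p) := by
      intro i j
      simpa using hcon i j
    rw [stab_shiftT] at hmem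
    exact hc (stab_snd_eq_zero hms hmem rfl)
  · rw [Simple, pairs_shiftT, states_shiftT]
    exact hs

/-- class size equals number of states -/
lemma card_class {T : ZMod τ → ZMod σ → ZMod n} {f : ZMod n → ZMod n → ZMod n}
    (hf : GenBy n τ σ f T) (hs : Simple n τ σ T) :
    (Finset.univ.filter (fun T' : ZMod τ → ZMod σ → ZMod n =>
      ∃ p : ZMod τ × ZMod σ, T' = shiftT T p)).card = (states n τ σ T).card := by
  classical
  haveI : Fintype ((ZMod τ × ZMod σ) ⧸ stab T) := Fintype.ofFinite _
  have hwd : ∀ a b : ZMod τ × ZMod σ, (QuotientAddGroup.leftRel (stab T)) a b →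
      shiftT T a = shiftT T b := by
    intro a b hab
    rw [QuotientAddGroup.leftRel_apply] at hab
    funext i j
    show T (i + a.1) (j + a.2) = T (i + b.1) (j + b.2)
    have := hab (i + a.1) (j + a.2)
    have e1 : i + a.1 + (-a + b).1 = i + b.1 := by
      have : (-a + b).1 = -a.1 + b.1 := rfl
      rw [this]; ring
    have e2 : j + a.2 + (-a + b).2 = j + b.2 := by
      have : (-a + b).2 = -a.2 + b.2 := rfl
      rw [this]; ring
    rw [e1, e2] at this
    exact this.symm
  let shbar : (ZMod τ × ZMod σ) ⧸ stab T → (ZMod τ → ZMod σ → ZMod n) :=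
    Quotient.lift (shiftT T) hwd
  have hinj : Function.Injective shbar := by
    intro a b
    induction a using Quotient.ind
    induction b using Quotient.ind
    rename_i a b
    intro hab
    refine (QuotientAddGroup.eq).2 ?_
    intro i j
    show T (i + (-a + b).1) (j + (-a + b).2) = T i j
    have h1 : shiftT T a (i - a.1) (j - a.2) = shiftT T b (i - a.1) (j - a.2) := by
      rw [show shiftT T a = shbar (Quotient.mk _ a) from rfl,
        show shiftT T b = shbar (Quotient.mk _ b) from rfl, hab]
    show _ = T i j
    have e0 : (-a + b).1 = -a.1 + b.1 := rfl
    have e0' : (-a + b).2 = -a.2 + b.2 := rfl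
    have e1 : i - a.1 + b.1 = i + (-a + b).1 := by rw [e0]; ring
    have e2 : j - a.2 + b.2 = j + (-a + b).2 := by rw [e0']; ring
    have e3 : i - a.1 + a.1 = i := by ring
    have e4 : j - a.2 + a.2 = j := by ring
    have h1' : T (i - a.1 + a.1) (j - a.2 + a.2) = T (i - a.1 + b.1) (j - a.2 + b.2) := h1
    rw [e1, e2, e3, e4] at h1'
    exact h1'.symm
  have hfilter : Finset.univ.filter (fun T' : ZMod τ → ZMod σ → ZMod n =>
      ∃ p : ZMod τ × ZMod σ, T' = shiftT T p) =
      Finset.univ.image (fun p : ZMod τ × ZMod σ => shiftT T p) := by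
    ext T'
    simp only [Finset.mem_filter, Finset.mem_univ, true_and, Finset.mem_image]
    constructor
    · rintro ⟨p, rfl⟩; exact ⟨p, rfl⟩
    · rintro ⟨p, rfl⟩; exact ⟨p, rfl⟩
  rw [hfilter]
  have hcomp : Finset.univ.image (fun p : ZMod τ × ZMod σ => shiftT T p) =
      Finset.univ.image shbar := by
    rw [← Finset.image_univ_of_surjective
      (QuotientAddGroup.mk_surjective : Function.Surjective
        (QuotientAddGroup.mk : ZMod τ × ZMod σ → (ZMod τ × ZMod σ) ⧸ stab T)),
      Finset.image_image]
    rfl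
  rw [hcomp, Finset.card_image_of_injective _ hinj, Finset.card_univ,
    ← Nat.card_eq_fintype_card]
  exact card_quotient_stab hf hs

end Tiles6
/-- The number of simple tiles (with minimal periods `τ`, `σ`, counted up to
space-time rotation) generated by the rule `f`. -/
noncomputable def simpleTileCount (n τ σ : ℕ) [NeZero τ] [NeZero σ]
    (f : ZMod n → ZMod n → ZMod n) : ℕ :=
  Nat.card (Quot (fun (T₁ T₂ : {T : ZMod τ → ZMod σ → ZMod n //
      GenBy n τ σ f T ∧ MinTemporal n τ σ T ∧ MinSpatial n τ σ T ∧ Simple n τ σ T}) =>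
    ∃ (t : ZMod τ) (c : ZMod σ), ∀ i j, T₂.1 i j = T₁.1 (i + t) (j + c)))
section Tiles7
open scoped Classical
variable {n τ σ : ℕ} [NeZero n] [NeZero τ] [NeZero σ]

lemma simpleTileCount_eq_sum (f : ZMod n → ZMod n → ZMod n) :
    (simpleTileCount n τ σ f : ℝ) =
    ∑ T ∈ Finset.univ.filter (fun T : ZMod τ → ZMod σ → ZMod n =>
        GenBy n τ σ f T ∧ MinTemporal n τ σ T ∧ MinSpatial n τ σ T ∧ Simple n τ σ T),
      1 / ((states n τ σ T).card : ℝ) := by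
  classical
  set r := fun (T₁ T₂ : {T : ZMod τ → ZMod σ → ZMod n //
      GenBy n τ σ f T ∧ MinTemporal n τ σ T ∧ MinSpatial n τ σ T ∧ Simple n τ σ T}) =>
    ∃ (t : ZMod τ) (c : ZMod σ), ∀ i j, T₂.1 i j = T₁.1 (i + t) (j + c) with hr
  have hequiv : Equivalence r := by
    constructor
    · intro T
      exact ⟨0, 0, fun i j => by simp⟩
    · rintro T₁ T₂ ⟨t, c, h⟩
      refine ⟨-t, -c, fun i j => ?_⟩
      have := h (i + -t) (j + -c)
      have e1 : i + -t + t = i := by ring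
      have e2 : j + -c + c = j := by ring
      rw [e1, e2] at this
      exact this.symm
    · rintro T₁ T₂ T₃ ⟨t, c, h⟩ ⟨t', c', h'⟩
      refine ⟨t + t', c + c', fun i j => ?_⟩
      rw [h' i j, h (i + t') (j + c')]
      rw [show i + t' + t = i + (t + t') by ring, show j + c' + c = j + (c + c') by ring]
  have hP : ∀ (T : {T : ZMod τ → ZMod σ → ZMod n //
      GenBy n τ σ f T ∧ MinTemporal n τ σ T ∧ MinSpatial n τ σ T ∧ Simple n τ σ T})
      (p : ZMod τ × ZMod σ),
      GenBy n τ σ f (shiftT T.1 p) ∧ MinTemporal n τ σ (shiftT T.1 p) ∧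
        MinSpatial n τ σ (shiftT T.1 p) ∧ Simple n τ σ (shiftT T.1 p) :=
    fun T p => pred_shiftT T.2 p
  haveI : Finite (Quot r) := Finite.of_surjective _ (fun q => Quot.exists_rep q)
  haveI : Fintype (Quot r) := Fintype.ofFinite _
  have hmk_surj : Function.Surjective (Quot.mk r) := fun q => Quot.exists_rep q
  have himg : Finset.univ.image (Quot.mk r) = Finset.univ :=
    Finset.image_univ_of_surjective hmk_surj
  have hcount : simpleTileCount n τ σ f = Fintype.card (Quot r) := by
    rw [simpleTileCount, Nat.card_eq_fintype_card]
  rw [hcount]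
  rw [Finset.sum_subtype (p := fun T : ZMod τ → ZMod σ → ZMod n =>
      GenBy n τ σ f T ∧ MinTemporal n τ σ T ∧ MinSpatial n τ σ T ∧ Simple n τ σ T) _
      (by intro x; simp) (fun T => 1 / ((states n τ σ T).card : ℝ))]
  rw [← Finset.sum_fiberwise_of_maps_to (g := Quot.mk r) (t := Finset.univ.image (Quot.mk r))
      (fun T _ => Finset.mem_image_of_mem _ (Finset.mem_univ T))]
  have hone : ∀ q ∈ Finset.univ.image (Quot.mk r),
      (∑ T ∈ Finset.univ.filter (fun T => Quot.mk r T = q),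
        1 / ((states n τ σ T.1).card : ℝ)) = 1 := by
    intro q hq
    obtain ⟨T₀, _, rfl⟩ := Finset.mem_image.1 hq
    have hrel : ∀ T ∈ Finset.univ.filter (fun T => Quot.mk r T = Quot.mk r T₀), r T₀ T := by
      intro T hT
      have := (Finset.mem_filter.1 hT).2
      have h1 : Relation.EqvGen r T T₀ := Quot.eq.1 this
      have h2 : r T T₀ := (Equivalence.eqvGen_iff hequiv).1 h1
      exact hequiv.symm h2
    have hconst : ∀ T ∈ Finset.univ.filter (fun T => Quot.mk r T = Quot.mk r T₀),
        states n τ σ T.1 = states n τ σ T₀.1 := by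
      intro T hT
      obtain ⟨t, c, h⟩ := hrel T hT
      have : T.1 = shiftT T₀.1 (t, c) := funext fun i => funext fun j => h i j
      rw [this, states_shiftT]
    rw [Finset.sum_congr rfl (fun T hT => by rw [hconst T hT])]
    rw [Finset.sum_const]
    have hcardfib : (Finset.univ.filter (fun T => Quot.mk r T = Quot.mk r T₀)).card =
        (states n τ σ T₀.1).card := by
      rw [← card_class T₀.2.1 T₀.2.2.2.2]
      refine Finset.card_bij (fun T _ => T.1) ?_ ?_ ?_
      · intro T hT
        obtain ⟨t, c, h⟩ := hrel T hT
        simp only [Finset.mem_filter, Finset.mem_univ, true_and]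
        exact ⟨(t, c), funext fun i => funext fun j => h i j⟩
      · intro a _ b _ hab
        exact Subtype.ext hab
      · intro T' hT'
        simp only [Finset.mem_filter, Finset.mem_univ, true_and] at hT'
        obtain ⟨p, rfl⟩ := hT'
        refine ⟨⟨shiftT T₀.1 p, hP T₀ p⟩, ?_, rfl⟩
        simp only [Finset.mem_filter, Finset.mem_univ, true_and]
        exact (Quot.sound ⟨p.1, p.2, fun i j => rfl⟩).symm
    rw [hcardfib]
    have hspos : 0 < (states n τ σ T₀.1).card := by
      refine Finset.card_pos.2 ⟨T₀.1 0 0, ?_⟩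
      rw [states]
      exact Finset.mem_image_of_mem _ (Finset.mem_univ (0, 0))
    rw [nsmul_eq_mul]
    rw [one_div, mul_inv_cancel₀ (by exact_mod_cast hspos.ne')]
  rw [Finset.sum_congr rfl hone, Finset.sum_const, himg, Finset.card_univ, nsmul_eq_mul, mul_one]
end Tiles7
section Tiles8
open scoped Classical
variable {n τ σ : ℕ} [NeZero n] [NeZero τ] [NeZero σ]

lemma card_Wd (d : ℕ) (hd : d ∈ (Nat.gcd τ σ).divisors) :
    ((Finset.univ.filter (fun T : ZMod τ → ZMod σ → ZMod n =>
      (MinTemporal n τ σ T ∧ MinSpatial n τ σ T ∧ Simple n τ σ T) ∧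
        ∃ f, GenBy n τ σ f T)).filter
      (fun T => Nat.card (stab T) = d)).card =
    Nat.totient d * Nat.descFactorial n (τ * σ / d) := by
  classical
  have hgcd : Nat.gcd τ σ ≠ 0 := (Nat.mem_divisors.1 hd).2
  have hdvd : d ∣ Nat.gcd τ σ := (Nat.mem_divisors.1 hd).1
  have hdpos : 0 < d := Nat.pos_of_ne_zero (by rintro rfl; exact hgcd (Nat.eq_zero_of_zero_dvd hdvd))
  have hdτ : d ∣ τ := hdvd.trans (Nat.gcd_dvd_left τ σ)
  have hdσ : d ∣ σ := hdvd.trans (Nat.gcd_dvd_right τ σ)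
  set Wd := (Finset.univ.filter (fun T : ZMod τ → ZMod σ → ZMod n =>
      (MinTemporal n τ σ T ∧ MinSpatial n τ σ T ∧ Simple n τ σ T) ∧
        ∃ f, GenBy n τ σ f T)).filter (fun T => Nat.card (stab T) = d) with hWd
  set Ed := Finset.univ.filter (fun p : ZMod τ × ZMod σ =>
      addOrderOf p.1 = d ∧ addOrderOf p.2 = d) with hEd
  set X := Finset.univ.filter
      (fun Tp : (ZMod τ → ZMod σ → ZMod n) × (ZMod τ × ZMod σ) =>
        ((∃ f, GenBy n τ σ f Tp.1) ∧ Simple n τ σ Tp.1) ∧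
        (addOrderOf Tp.2.1 = d ∧ addOrderOf Tp.2.2 = d) ∧
        AddSubgroup.zmultiples Tp.2 = stab Tp.1) with hX
  -- order of pairs in X
  have hordp : ∀ p : ZMod τ × ZMod σ, addOrderOf p.1 = d → addOrderOf p.2 = d →
      Nat.card (AddSubgroup.zmultiples p) = d := by
    intro p h1 h2
    rw [Nat.card_zmultiples]
    have : addOrderOf p = addOrderOf (p.1, p.2) := rfl
    rw [this, Prod.addOrderOf_mk, h1, h2, Nat.lcm_self]
  -- first count : fibers over tiles
  have hcount1 : X.card = Wd.card * Nat.totient d := by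
    rw [Finset.card_eq_sum_card_fiberwise (f := Prod.fst) (t := Wd) ?_]
    · rw [Finset.sum_congr rfl ?_, Finset.sum_const, smul_eq_mul]
      intro T hT
      rw [hWd, Finset.mem_filter, Finset.mem_filter] at hT
      obtain ⟨⟨_, ⟨hmt, hms, hsimp⟩, hex⟩, hcard⟩ := hT
      have hgen := card_generators (n := n) hmt hms
      rw [hcard] at hgen
      rw [← hgen]
      refine Finset.card_bij (fun Tp _ => Tp.2) ?_ ?_ ?_
      · intro Tp hTp
        simp only [Finset.mem_filter, Finset.mem_univ, true_and, hX] at hTp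
        obtain ⟨⟨_, ⟨ho1, ho2⟩, hz⟩, hfst⟩ := hTp
        simp only [Finset.mem_filter, Finset.mem_univ, true_and]
        rw [hfst] at hz
        exact ⟨⟨ho1, ho2⟩, hz⟩
      · intro a ha b hb hab
        simp only [Finset.mem_filter, hX] at ha hb
        have hab' : a.2 = b.2 := hab
        exact Prod.ext (by rw [ha.2, hb.2]) hab'
      · intro p hp
        simp only [Finset.mem_filter, Finset.mem_univ, true_and] at hp
        obtain ⟨⟨ho1, ho2⟩, hz⟩ := hp
        refine ⟨(T, p), ?_, rfl⟩
        simp only [Finset.mem_filter, Finset.mem_univ, true_and, hX]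
        exact ⟨⟨⟨hex, hsimp⟩, ⟨ho1, ho2⟩, hz⟩, trivial⟩
    · -- maps to Wd
      intro Tp hTp
      simp only [Finset.mem_coe] at hTp ⊢
      simp only [Finset.mem_filter, Finset.mem_univ, true_and, hX] at hTp
      obtain ⟨⟨hex, hsimp⟩, ⟨ho1, ho2⟩, hz⟩ := hTp
      have hmin := min_of_stab_eq (n := n) ho1 ho2 hz.symm
      simp only [hWd, Finset.mem_filter, Finset.mem_univ, true_and]
      refine ⟨⟨⟨hmin.1, hmin.2, hsimp⟩, hex⟩, ?_⟩
      rw [← hz]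
      exact hordp _ ho1 ho2
  -- second count : fibers over pairs
  have hcount2 : X.card = Ed.card * Nat.descFactorial n (τ * σ / d) := by
    rw [Finset.card_eq_sum_card_fiberwise (f := Prod.snd) (t := Ed) ?_]
    · rw [Finset.sum_congr rfl ?_, Finset.sum_const, smul_eq_mul]
      intro p hp
      rw [hEd, Finset.mem_filter] at hp
      obtain ⟨_, ho1, ho2⟩ := hp
      have hQcard : Nat.card ((ZMod τ × ZMod σ) ⧸ AddSubgroup.zmultiples p) = τ * σ / d := by
        have h1 := card_quotient_mul_card (AddSubgroup.zmultiples p)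
        rw [hordp p ho1 ho2] at h1
        rw [← h1]
        exact (Nat.mul_div_cancel _ hdpos).symm
      have htiles := card_tiles_with_stab (n := n) (AddSubgroup.zmultiples p)
      rw [hQcard] at htiles
      rw [← htiles]
      refine Finset.card_bij (fun Tp _ => Tp.1) ?_ ?_ ?_
      · intro Tp hTp
        simp only [Finset.mem_filter, Finset.mem_univ, true_and, hX] at hTp
        obtain ⟨⟨hgood, _hords, hz⟩, hsnd⟩ := hTp
        simp only [Finset.mem_filter, Finset.mem_univ, true_and]
        rw [← hsnd]
        exact ⟨hgood, hz.symm⟩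
      · intro a ha b hb hab
        simp only [Finset.mem_filter, hX] at ha hb
        have hab' : a.1 = b.1 := hab
        exact Prod.ext hab' (by rw [ha.2, hb.2])
      · intro T hT
        simp only [Finset.mem_filter, Finset.mem_univ, true_and] at hT
        obtain ⟨hgood, hz⟩ := hT
        refine ⟨(T, p), ?_, rfl⟩
        simp only [Finset.mem_filter, Finset.mem_univ, true_and, hX]
        exact ⟨⟨hgood, ⟨ho1, ho2⟩, hz.symm⟩, trivial⟩
    · intro Tp hTp
      simp only [Finset.mem_coe] at hTp ⊢
      simp only [Finset.mem_filter, Finset.mem_univ, true_and, hX] at hTp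
      simp only [hEd, Finset.mem_filter, Finset.mem_univ, true_and]
      exact hTp.2.1
  -- |Ed| = totient d * totient d
  have hEdcard : Ed.card = Nat.totient d * Nat.totient d := by
    rw [hEd]
    have hsplit : (Finset.univ.filter (fun p : ZMod τ × ZMod σ =>
        addOrderOf p.1 = d ∧ addOrderOf p.2 = d)) =
        ((Finset.univ.filter fun t : ZMod τ => addOrderOf t = d) ×ˢ
          (Finset.univ.filter fun c : ZMod σ => addOrderOf c = d)) := by
      ext p
      simp [Finset.mem_product]
    rw [hsplit, Finset.card_product]
    congr 1
    · refine IsAddCyclic.card_addOrderOf_eq_totient ?_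
      rw [ZMod.card]
      exact hdτ
    · refine IsAddCyclic.card_addOrderOf_eq_totient ?_
      rw [ZMod.card]
      exact hdσ
  have hmain : Wd.card * Nat.totient d =
      Nat.totient d * Nat.totient d * Nat.descFactorial n (τ * σ / d) := by
    rw [← hcount1, hcount2, hEdcard]
  have htpos : 0 < Nat.totient d := Nat.totient_pos.2 hdpos
  have : Wd.card * Nat.totient d =
      (Nat.totient d * Nat.descFactorial n (τ * σ / d)) * Nat.totient d := by
    rw [hmain]; ring
  exact Nat.eq_of_mul_eq_mul_right htpos this

end Tiles8
/-- `Σ_{d | gcd(τ,σ)} φ(d) · C(n, τσ/d) · (τσ/d - 1)! / n^(τσ/d)`. -/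
noncomputable def expectedSimpleTiles (τ σ n : ℕ) : ℝ :=
  ∑ d ∈ (Nat.gcd τ σ).divisors,
    ((Nat.totient d : ℝ) * (Nat.choose n (τ * σ / d)) * (Nat.factorial (τ * σ / d - 1))) /
      (n : ℝ) ^ (τ * σ / d)
section Tiles9
open scoped Classical
variable {τ σ : ℕ} [NeZero τ] [NeZero σ]

lemma main_identity (n : ℕ) [NeZero n] :
    (∑ f : ZMod n → ZMod n → ZMod n, (simpleTileCount n τ σ f : ℝ)) / (n : ℝ) ^ (n ^ 2) =
      expectedSimpleTiles τ σ n := by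
  classical
  have hτ : 0 < τ := Nat.pos_of_ne_zero (NeZero.ne τ)
  have hσ : 0 < σ := Nat.pos_of_ne_zero (NeZero.ne σ)
  have hn : 0 < n := Nat.pos_of_ne_zero (NeZero.ne n)
  have hnR : (0 : ℝ) < n := by exact_mod_cast hn
  have hgcdpos : 0 < Nat.gcd τ σ := Nat.gcd_pos_of_pos_left σ hτ
  have hgcd : Nat.gcd τ σ ≠ 0 := hgcdpos.ne'
  rw [Finset.sum_congr rfl (fun f _ => simpleTileCount_eq_sum f)]
  rw [Finset.sum_congr rfl (fun f _ => Finset.sum_filter _ _), Finset.sum_comm]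
  have h45 : ∀ T : ZMod τ → ZMod σ → ZMod n,
      (∑ f : ZMod n → ZMod n → ZMod n, if GenBy n τ σ f T ∧ MinTemporal n τ σ T ∧
          MinSpatial n τ σ T ∧ Simple n τ σ T then 1 / ((states n τ σ T).card : ℝ) else 0)
      = if MinTemporal n τ σ T ∧ MinSpatial n τ σ T ∧ Simple n τ σ T then
          ((Finset.univ.filter (fun f : ZMod n → ZMod n → ZMod n =>
            GenBy n τ σ f T)).card : ℝ) * (1 / ((states n τ σ T).card : ℝ)) else 0 := by
    intro T
    by_cases hRest : MinTemporal n τ σ T ∧ MinSpatial n τ σ T ∧ Simple n τ σ T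
    · simp only [hRest, and_true, if_true]
      rw [← Finset.sum_filter, Finset.sum_const, nsmul_eq_mul]
    · simp only [hRest, and_false, if_false]
      simp
  rw [Finset.sum_congr rfl (fun T _ => h45 T), ← Finset.sum_filter]
  -- restrict to tiles generated by at least one rule
  have hsub : Finset.univ.filter (fun T : ZMod τ → ZMod σ → ZMod n =>
      (MinTemporal n τ σ T ∧ MinSpatial n τ σ T ∧ Simple n τ σ T) ∧ ∃ f, GenBy n τ σ f T) ⊆
      Finset.univ.filter (fun T : ZMod τ → ZMod σ → ZMod n =>
      MinTemporal n τ σ T ∧ MinSpatial n τ σ T ∧ Simple n τ σ T) := by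
    intro T hT
    simp only [Finset.mem_filter, Finset.mem_univ, true_and] at hT ⊢
    exact hT.1
  have hzero : ∀ T ∈ Finset.univ.filter (fun T : ZMod τ → ZMod σ → ZMod n =>
      MinTemporal n τ σ T ∧ MinSpatial n τ σ T ∧ Simple n τ σ T),
      T ∉ Finset.univ.filter (fun T : ZMod τ → ZMod σ → ZMod n =>
      (MinTemporal n τ σ T ∧ MinSpatial n τ σ T ∧ Simple n τ σ T) ∧ ∃ f, GenBy n τ σ f T) →
      ((Finset.univ.filter (fun f : ZMod n → ZMod n → ZMod n =>
        GenBy n τ σ f T)).card : ℝ) * (1 / ((states n τ σ T).card : ℝ)) = 0 := by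
    intro T hT hTn
    simp only [Finset.mem_filter, Finset.mem_univ, true_and] at hT hTn
    have hnof : ¬∃ f, GenBy n τ σ f T := fun hex => hTn ⟨hT, hex⟩
    have : (Finset.univ.filter (fun f : ZMod n → ZMod n → ZMod n => GenBy n τ σ f T)) = ∅ := by
      refine Finset.filter_eq_empty_iff.2 ?_
      intro f _
      exact fun hf => hnof ⟨f, hf⟩
    rw [this]
    simp
  rw [← Finset.sum_subset hsub hzero]
  -- partition by the order of the stabilizer
  have hmap : ∀ T ∈ Finset.univ.filter (fun T : ZMod τ → ZMod σ → ZMod n =>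
      (MinTemporal n τ σ T ∧ MinSpatial n τ σ T ∧ Simple n τ σ T) ∧ ∃ f, GenBy n τ σ f T),
      Nat.card (stab T) ∈ (Nat.gcd τ σ).divisors := by
    intro T hT
    simp only [Finset.mem_filter, Finset.mem_univ, true_and] at hT
    exact Nat.mem_divisors.2 ⟨card_stab_dvd_gcd hT.1.1 hT.1.2.1, hgcd⟩
  rw [← Finset.sum_fiberwise_of_maps_to hmap]
  -- evaluate each fiber
  have hfiber : ∀ d ∈ (Nat.gcd τ σ).divisors,
      (∑ T ∈ (Finset.univ.filter (fun T : ZMod τ → ZMod σ → ZMod n =>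
        (MinTemporal n τ σ T ∧ MinSpatial n τ σ T ∧ Simple n τ σ T) ∧
          ∃ f, GenBy n τ σ f T)).filter (fun T => Nat.card (stab T) = d),
        ((Finset.univ.filter (fun f : ZMod n → ZMod n → ZMod n =>
          GenBy n τ σ f T)).card : ℝ) * (1 / ((states n τ σ T).card : ℝ)))
      = (Nat.totient d * Nat.descFactorial n (τ * σ / d) : ℝ) *
        ((n : ℝ) ^ (n ^ 2) / ((n : ℝ) ^ (τ * σ / d) * (τ * σ / d : ℕ))) := by
    intro d hd
    have hdpos : 0 < d := Nat.pos_of_ne_zero (by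
      rintro rfl
      exact hgcd (Nat.eq_zero_of_zero_dvd (Nat.mem_divisors.1 hd).1))
    have hterm : ∀ T ∈ (Finset.univ.filter (fun T : ZMod τ → ZMod σ → ZMod n =>
        (MinTemporal n τ σ T ∧ MinSpatial n τ σ T ∧ Simple n τ σ T) ∧
          ∃ f, GenBy n τ σ f T)).filter (fun T => Nat.card (stab T) = d),
        ((Finset.univ.filter (fun f : ZMod n → ZMod n → ZMod n =>
          GenBy n τ σ f T)).card : ℝ) * (1 / ((states n τ σ T).card : ℝ)) =
        (n : ℝ) ^ (n ^ 2) / ((n : ℝ) ^ (τ * σ / d) * (τ * σ / d : ℕ)) := by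
      intro T hT
      simp only [Finset.mem_filter, Finset.mem_univ, true_and] at hT
      obtain ⟨⟨⟨hmt, hms, hsimp⟩, f₀, hf₀⟩, hcard⟩ := hT
      have hs : (states n τ σ T).card * d = τ * σ := by
        rw [← hcard]
        exact card_states_mul_card_stab hf₀ hsimp
      have hsval : (states n τ σ T).card = τ * σ / d := by
        rw [← hs]
        exact (Nat.mul_div_cancel _ hdpos).symm
      have hcg := card_genBy hf₀ hsimp
      have hcgR : ((Finset.univ.filter (fun f : ZMod n → ZMod n → ZMod n =>
          GenBy n τ σ f T)).card : ℝ) * (n : ℝ) ^ ((states n τ σ T).card) =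
          (n : ℝ) ^ (n ^ 2) := by
        exact_mod_cast congrArg (Nat.cast : ℕ → ℝ) hcg
      have hspos : 0 < (states n τ σ T).card := by
        refine Finset.card_pos.2 ⟨T 0 0, ?_⟩
        rw [states]
        exact Finset.mem_image_of_mem _ (Finset.mem_univ (0, 0))
      rw [hsval] at hcgR hspos
      have hcgval : ((Finset.univ.filter (fun f : ZMod n → ZMod n → ZMod n =>
          GenBy n τ σ f T)).card : ℝ) = (n : ℝ) ^ (n ^ 2) / (n : ℝ) ^ (τ * σ / d) := by
        rw [eq_div_iff (by positivity)]
        exact hcgR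
      rw [hcgval, hsval]
      rw [div_mul_div_comm, mul_one]
    rw [Finset.sum_congr rfl hterm, Finset.sum_const, nsmul_eq_mul, card_Wd d hd]
    push_cast
    ring
  rw [Finset.sum_congr rfl hfiber, Finset.sum_div, expectedSimpleTiles]
  refine Finset.sum_congr rfl ?_
  intro d hd
  have hdpos : 0 < d := Nat.pos_of_ne_zero (by
    rintro rfl
    exact hgcd (Nat.eq_zero_of_zero_dvd (Nat.mem_divisors.1 hd).1))
  set s := τ * σ / d with hsdef
  have hspos : 0 < s := by
    refine Nat.div_pos (Nat.le_of_dvd (by positivity) ?_) hdpos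
    exact ((Nat.mem_divisors.1 hd).1.trans (Nat.gcd_dvd_left τ σ)).mul_right σ
  have hdesc : (Nat.descFactorial n s : ℝ) =
      (Nat.choose n s : ℝ) * s * (Nat.factorial (s - 1)) := by
    have h1 : Nat.descFactorial n s = Nat.choose n s * Nat.factorial s := by
      rw [Nat.choose_eq_descFactorial_div_factorial,
        Nat.div_mul_cancel (Nat.factorial_dvd_descFactorial n s)]
    have h2 : Nat.factorial s = s * Nat.factorial (s - 1) := by
      obtain ⟨s', hs'⟩ := Nat.exists_eq_succ_of_ne_zero hspos.ne'
      rw [hs']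
      simp [Nat.factorial_succ]
    rw [h1, h2]
    push_cast
    ring
  have hsne : ((s : ℕ) : ℝ) ≠ 0 := by exact_mod_cast hspos.ne'
  have hpne : (n : ℝ) ^ s ≠ 0 := by positivity
  have hPne : (n : ℝ) ^ (n ^ 2) ≠ 0 := by positivity
  rw [hdesc]
  field_simp
end Tiles9
/-- `λ_{τ,σ} = (1/(τσ)) Σ_{d | gcd(τ,σ)} φ(d)·d`. -/
noncomputable def lamR (τ σ : ℕ) : ℝ :=
  (∑ d ∈ (Nat.gcd τ σ).divisors, ((Nat.totient d : ℝ) * d)) / (τ * σ)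
section Limit

lemma tendsto_expected (τ σ : ℕ) (hτ : 0 < τ) (hσ : 0 < σ) :
    Filter.Tendsto (expectedSimpleTiles τ σ) Filter.atTop (nhds (lamR τ σ)) := by
  have hgcdpos : 0 < Nat.gcd τ σ := Nat.gcd_pos_of_pos_left σ hτ
  have hgcd : Nat.gcd τ σ ≠ 0 := hgcdpos.ne'
  have hlam : lamR τ σ =
      ∑ d ∈ (Nat.gcd τ σ).divisors, ((Nat.totient d : ℝ) * d) / (τ * σ) := by
    rw [lamR]
    exact Finset.sum_div _ _ _
  rw [hlam]
  show Filter.Tendsto (fun n : ℕ => ∑ d ∈ (Nat.gcd τ σ).divisors,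
      ((Nat.totient d : ℝ) * (Nat.choose n (τ * σ / d)) *
        (Nat.factorial (τ * σ / d - 1))) / (n : ℝ) ^ (τ * σ / d)) Filter.atTop _
  refine tendsto_finset_sum _ ?_
  intro d hd
  have hdvd : d ∣ Nat.gcd τ σ := (Nat.mem_divisors.1 hd).1
  have hdpos : 0 < d := Nat.pos_of_ne_zero (by
    rintro rfl; exact hgcd (Nat.eq_zero_of_zero_dvd hdvd))
  have hdvdτσ : d ∣ τ * σ := (hdvd.trans (Nat.gcd_dvd_left τ σ)).mul_right σ
  set s := τ * σ / d with hsdef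
  have hsd : s * d = τ * σ := Nat.div_mul_cancel hdvdτσ
  have hspos : 0 < s := Nat.div_pos (Nat.le_of_dvd (by positivity) hdvdτσ) hdpos
  have hfs : (Nat.factorial s : ℝ) = s * Nat.factorial (s - 1) := by
    obtain ⟨s', hs'⟩ := Nat.exists_eq_succ_of_ne_zero hspos.ne'
    rw [hs']
    push_cast [Nat.factorial_succ]
    ring
  have hkey : ((Nat.totient d : ℝ) * d) / (τ * σ) =
      (Nat.totient d : ℝ) * (Nat.factorial (s - 1)) / (Nat.factorial s) := by
    have hτσ : ((τ : ℝ) * σ) = (s : ℝ) * d := by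
      exact_mod_cast congrArg (Nat.cast : ℕ → ℝ) hsd.symm
    rw [hτσ, hfs]
    have h1 : (0:ℝ) < s := by exact_mod_cast hspos
    have h2 : (0:ℝ) < d := by exact_mod_cast hdpos
    have h3 : (0:ℝ) < Nat.factorial (s - 1) := by exact_mod_cast Nat.factorial_pos _
    field_simp
  have hprod : Filter.Tendsto (fun n : ℕ => ((Nat.totient d : ℝ) * d) / (τ * σ) *
      ∏ i ∈ Finset.range s, (1 - (i : ℝ) / (n : ℝ))) Filter.atTop
      (nhds (((Nat.totient d : ℝ) * d) / (τ * σ) * ∏ _i ∈ Finset.range s, (1 : ℝ))) := by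
    refine Filter.Tendsto.const_mul _ ?_
    refine tendsto_finset_prod _ ?_
    intro i _
    have h0 : Filter.Tendsto (fun n : ℕ => (i : ℝ) / (n : ℝ)) Filter.atTop (nhds 0) :=
      tendsto_const_div_atTop_nhds_zero_nat (i : ℝ)
    simpa using tendsto_const_nhds.sub h0
  simp only [Finset.prod_const_one, mul_one] at hprod
  refine Filter.Tendsto.congr' ?_ hprod
  rw [Filter.eventuallyEq_iff_exists_mem]
  refine ⟨{n | s ≤ n}, Filter.mem_atTop s, ?_⟩
  intro n hn
  simp only [Set.mem_setOf_eq] at hn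
  have hnpos : 0 < n := lt_of_lt_of_le hspos hn
  have hnR : (0:ℝ) < n := by exact_mod_cast hnpos
  show ((Nat.totient d : ℝ) * d) / (τ * σ) * ∏ i ∈ Finset.range s, (1 - (i : ℝ) / (n : ℝ)) =
    ((Nat.totient d : ℝ) * (Nat.choose n s) * (Nat.factorial (s - 1))) / (n : ℝ) ^ s
  have hdesc : (Nat.descFactorial n s : ℝ) = ∏ i ∈ Finset.range s, ((n : ℝ) - i) := by
    rw [Nat.descFactorial_eq_prod_range]
    push_cast
    refine Finset.prod_congr rfl ?_
    intro i hi
    have hin : i ≤ n := le_trans (Nat.le_of_lt (Finset.mem_range.1 hi)) hn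
    rw [Nat.cast_sub hin]
  have hchoose : (Nat.choose n s : ℝ) = (Nat.descFactorial n s : ℝ) / (Nat.factorial s : ℝ) := by
    rw [eq_div_iff (by exact_mod_cast (Nat.factorial_pos s).ne')]
    have h2 : Nat.choose n s * Nat.factorial s = Nat.descFactorial n s := by
      rw [Nat.choose_eq_descFactorial_div_factorial,
        Nat.div_mul_cancel (Nat.factorial_dvd_descFactorial n s)]
    exact_mod_cast congrArg (Nat.cast : ℕ → ℝ) h2
  have hprodeq : ∏ i ∈ Finset.range s, (1 - (i : ℝ) / (n : ℝ)) =
      (∏ i ∈ Finset.range s, ((n : ℝ) - i)) / (n : ℝ) ^ s := by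
    have h1 : (n:ℝ) ^ s = ∏ _i ∈ Finset.range s, (n:ℝ) := by
      rw [Finset.prod_const, Finset.card_range]
    rw [h1, ← Finset.prod_div_distrib]
    refine Finset.prod_congr rfl ?_
    intro i _
    rw [sub_div, div_self hnR.ne']
  rw [hkey, hchoose, hdesc, hprodeq]
  have hsne : (Nat.factorial s : ℝ) ≠ 0 := by exact_mod_cast (Nat.factorial_pos s).ne'
  have hpne : (n : ℝ) ^ s ≠ 0 := by positivity
  field_simp
end Limit

/-- The expected number of simple tiles with periods `τ`, `σ` under a uniformly
random `n`-state rule equals `Σ_{d | gcd(τ,σ)} φ(d)·C(n,τσ/d)·(τσ/d - 1)!/n^(τσ/d)`,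
which converges to `λ_{τ,σ}` as `n → ∞`. -/
theorem expected_simple_tiles (τ σ : ℕ) [NeZero τ] [NeZero σ] (hτ : 0 < τ) (hσ : 0 < σ) :
    (∀ (n : ℕ) [NeZero n],
      (∑ f : ZMod n → ZMod n → ZMod n, (simpleTileCount n τ σ f : ℝ)) / (n : ℝ) ^ (n ^ 2) =
        expectedSimpleTiles τ σ n) ∧
    Filter.Tendsto (expectedSimpleTiles τ σ) Filter.atTop (nhds (lamR τ σ)) := by
  refine ⟨?_, tendsto_expected τ σ hτ hσ⟩
  intro n _
  exact main_identity n
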